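/- arXiv:2008.12373 — 2 statements merged into one kernel-verified Lean document; each statement's English description precedes it below -/
import Mathlib

section
/- Let M be a counting measure with N·a atoms all lying in a set S (where a > 0 is such that N·a ∈ ℕ), rescaled so that M(S) = a, and let k ≥ 1. Then the difference between sampling with replacement and sampling without replacement of k points, evaluated on the indicator of S^k, satisfies ⟨M^{⊗k} − M^{⊗↓k}, 1_{S^k}⟩ = a^k · (1 − ∏_{j=0}^{k−1}(1 − j/(N·a))), where in the without-replacement measure each sampled atom subtracts mass 1/N. In particular this quantity is nonnegative and bounded above by a^{k−1}·k(k−1)/(2N). -/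
open MeasureTheory
open scoped ENNReal NNReal

/-- Sampling with replacement of `k` points from `M`: the `k`-fold product `M^{⊗k}`. -/
noncomputable def sampWR {P : Type*} [MeasurableSpace P] :
    (k : ℕ) → Measure P → Measure (Fin k → P)
  | 0, _ => Measure.dirac (fun i => i.elim0)
  | (k + 1), M => M.bind (fun p => (sampWR k M).map (fun v => Fin.cons p v))

/-- Sampling without replacement of `k` points from the rescaled measure `M`, where each
sampled atom subtracts mass `1/N`:
`M^{⊗↓k}(dp₁,…,dp_k) = M(dp₁)(M−(1/N)δ_{p₁})(dp₂)⋯(M−(1/N)δ_{p₁}−⋯−(1/N)δ_{p_{k−1}})(dp_k)`. -/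
noncomputable def sampWON {P : Type*} [MeasurableSpace P] (N : ℕ) :
    (k : ℕ) → Measure P → Measure (Fin k → P)
  | 0, _ => Measure.dirac (fun i => i.elim0)
  | (k + 1), M =>
      M.bind (fun p =>
        (sampWON N k (M - (N : ℝ≥0∞)⁻¹ • Measure.dirac p)).map (fun v => Fin.cons p v))

lemma exists_measurable_agree {P Q : Type*} [MeasurableSpace P] [MeasurableSingletonClass P]
    [MeasurableSpace Q] (L : List P) (g : P → Measure Q) :
    ∃ g₀ : P → Measure Q, Measurable g₀ ∧ ∀ p ∈ L, g₀ p = g p := by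
  classical
  induction L with
  | nil => exact ⟨fun _ => 0, measurable_const, by simp⟩
  | cons x L ih =>
    obtain ⟨g₀, hg₀, hag⟩ := ih
    refine ⟨({x} : Set P).piecewise (fun _ => g x) g₀,
      Measurable.piecewise (measurableSet_singleton x) measurable_const hg₀, ?_⟩
    intro p hp
    rcases List.mem_cons.mp hp with h | h
    · subst h
      rw [Set.piecewise_eq_of_mem _ _ _ (Set.mem_singleton p)]
    · by_cases hx : p = x
      · subst hx
        rw [Set.piecewise_eq_of_mem _ _ _ (Set.mem_singleton p)]
      · rw [Set.piecewise_eq_of_notMem _ _ _ (by simpa using hx)]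
        exact hag p h

lemma bind_atoms {P Q : Type*} [MeasurableSpace P] [MeasurableSingletonClass P] [MeasurableSpace Q]
    {n : ℕ} (c : ℝ≥0∞) (xs : Fin n → P) (t : Finset (Fin n)) (g : P → Measure Q) :
    (c • ∑ i ∈ t, Measure.dirac (xs i)).bind g = c • ∑ i ∈ t, g (xs i) := by
  obtain ⟨g₀, hg₀, hag⟩ := exists_measurable_agree ((List.finRange n).map xs) g
  have hxs : ∀ i : Fin n, g₀ (xs i) = g (xs i) := fun i =>
    hag _ (List.mem_map_of_mem (List.mem_finRange i))
  have hnull : (c • ∑ i ∈ t, Measure.dirac (xs i)) {p | ¬ g p = g₀ p} = 0 := by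
    rw [Measure.smul_apply, Measure.coe_finset_sum, Finset.sum_apply]
    have h0 : ∀ i ∈ t, Measure.dirac (xs i) {p | ¬ g p = g₀ p} = 0 := by
      intro i _
      refine measure_mono_null (t := ({xs i}ᶜ : Set P)) ?_ ?_
      · intro p hp hmem
        rw [Set.mem_singleton_iff] at hmem
        exact hp (by rw [hmem, hxs i])
      · simp [Measure.dirac_apply' _ (measurableSet_singleton (xs i)).compl]
    rw [Finset.sum_eq_zero h0, smul_zero]
  have hae : g =ᵐ[c • ∑ i ∈ t, Measure.dirac (xs i)] g₀ := ae_iff.mpr hnull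
  have hbind : (c • ∑ i ∈ t, Measure.dirac (xs i)).bind g
      = (c • ∑ i ∈ t, Measure.dirac (xs i)).bind g₀ := by
    unfold Measure.bind
    rw [Measure.map_congr hae]
  rw [hbind]
  ext s hs
  rw [Measure.bind_apply hs hg₀.aemeasurable, lintegral_smul_measure, lintegral_finset_sum_measure,
    Measure.smul_apply, Measure.coe_finset_sum, Finset.sum_apply]
  simp only [lintegral_dirac, hxs, smul_eq_mul]

lemma measurable_fin_cons {P : Type*} [MeasurableSpace P] {k : ℕ} (p : P) :
    Measurable (fun v : Fin k → P => (Fin.cons p v : Fin (k + 1) → P)) := by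
  apply measurable_pi_lambda
  intro i
  induction i using Fin.cases with
  | zero => simp only [Fin.cons_zero]; exact measurable_const
  | succ j => simp only [Fin.cons_succ]; exact measurable_pi_apply j

lemma measurable_T {P : Type*} [MeasurableSpace P] [MeasurableSingletonClass P]
    {n : ℕ} (pts : Fin n → P) (k : ℕ) :
    MeasurableSet {v : Fin k → P | ∀ i, v i ∈ Set.range pts} := by
  have h : {v : Fin k → P | ∀ i, v i ∈ Set.range pts}
      = ⋂ i, (fun v : Fin k → P => v i) ⁻¹' (Set.range pts) := by
    ext v; simp [Set.mem_iInter]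
  rw [h]
  exact MeasurableSet.iInter fun i =>
    (measurable_pi_apply i) ((Set.finite_range pts).measurableSet)

lemma cons_preimage_subset {P : Type*} {n : ℕ} (pts : Fin n → P) (k : ℕ)
    (W : Set (Fin (k + 1) → P)) (hW : {v : Fin (k+1) → P | ∀ i, v i ∈ Set.range pts} ⊆ W)
    (i : Fin n) :
    {v : Fin k → P | ∀ j, v j ∈ Set.range pts}
      ⊆ (fun v : Fin k → P => (Fin.cons (pts i) v : Fin (k+1) → P)) ⁻¹' W := by
  intro v hv
  apply hW
  intro j
  induction j using Fin.cases with
  | zero => simp only [Fin.cons_zero]; exact ⟨i, rfl⟩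
  | succ l => simpa using hv l

lemma sampWR_val {P : Type*} [MeasurableSpace P] [MeasurableSingletonClass P]
    (N n : ℕ) (pts : Fin n → P) :
    ∀ (k : ℕ) (W : Set (Fin k → P)), MeasurableSet W →
      {v : Fin k → P | ∀ i, v i ∈ Set.range pts} ⊆ W →
      sampWR k ((N : ℝ≥0∞)⁻¹ • ∑ i, Measure.dirac (pts i)) W = ((n : ℝ≥0∞) / N) ^ k := by
  intro k
  induction k with
  | zero =>
    intro W hWm hWT
    rw [pow_zero]
    exact Measure.dirac_apply_of_mem (hWT (fun i => i.elim0))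
  | succ k ih =>
    intro W hWm hWT
    have hunf : sampWR (k+1) ((N : ℝ≥0∞)⁻¹ • ∑ i, Measure.dirac (pts i))
        = ((N : ℝ≥0∞)⁻¹ • ∑ i, Measure.dirac (pts i)).bind
          (fun p => (sampWR k ((N : ℝ≥0∞)⁻¹ • ∑ i, Measure.dirac (pts i))).map
            (fun v => Fin.cons p v)) := rfl
    rw [hunf, bind_atoms, Measure.smul_apply, Measure.coe_finset_sum, Finset.sum_apply]
    have hterm : ∀ i : Fin n,
        (Measure.map (fun v : Fin k → P => (Fin.cons (pts i) v : Fin (k+1) → P))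
          (sampWR k ((N : ℝ≥0∞)⁻¹ • ∑ i, Measure.dirac (pts i)))) W
        = ((n : ℝ≥0∞) / N) ^ k := by
      intro i
      rw [Measure.map_apply (measurable_fin_cons (pts i)) hWm]
      exact ih _ ((measurable_fin_cons (pts i)) hWm) (cons_preimage_subset pts k W hWT i)
    calc (N : ℝ≥0∞)⁻¹ • ∑ i : Fin n,
          (Measure.map (fun v : Fin k → P => (Fin.cons (pts i) v : Fin (k+1) → P))
            (sampWR k ((N : ℝ≥0∞)⁻¹ • ∑ i, Measure.dirac (pts i)))) W
        = (N : ℝ≥0∞)⁻¹ • ∑ _i : Fin n, ((n : ℝ≥0∞) / N) ^ k := by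
          congr 1; exact Finset.sum_congr rfl fun i _ => hterm i
      _ = ((n : ℝ≥0∞) / N) ^ (k + 1) := by
          rw [Finset.sum_const, Finset.card_univ, Fintype.card_fin, smul_eq_mul, nsmul_eq_mul,
            pow_succ]
          rw [ENNReal.div_eq_inv_mul]
          ring

lemma sub_dirac_erase {P : Type*} [MeasurableSpace P]
    (N n : ℕ) (hN : N ≠ 0) (pts : Fin n → P) (t : Finset (Fin n)) (i : Fin n) (hi : i ∈ t) :
    ((N : ℝ≥0∞)⁻¹ • ∑ j ∈ t, Measure.dirac (pts j)) - (N : ℝ≥0∞)⁻¹ • Measure.dirac (pts i)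
      = (N : ℝ≥0∞)⁻¹ • ∑ j ∈ t.erase i, Measure.dirac (pts j) := by
  haveI : IsFiniteMeasure ((N : ℝ≥0∞)⁻¹ • Measure.dirac (pts i)) := by
    constructor
    rw [Measure.smul_apply, smul_eq_mul]
    exact ENNReal.mul_lt_top (ENNReal.inv_lt_top.mpr (by exact_mod_cast Nat.pos_of_ne_zero hN))
      (by simp)
  have h : ((N : ℝ≥0∞)⁻¹ • ∑ j ∈ t, Measure.dirac (pts j))
      = ((N : ℝ≥0∞)⁻¹ • ∑ j ∈ t.erase i, Measure.dirac (pts j))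
        + (N : ℝ≥0∞)⁻¹ • Measure.dirac (pts i) := by
    rw [← smul_add, ← Finset.sum_erase_add t _ hi]
  rw [h, Measure.add_sub_cancel]

lemma sampWON_val {P : Type*} [MeasurableSpace P] [MeasurableSingletonClass P]
    (N n : ℕ) (hN : N ≠ 0) (pts : Fin n → P) :
    ∀ (k : ℕ) (t : Finset (Fin n)) (W : Set (Fin k → P)), MeasurableSet W →
      {v : Fin k → P | ∀ i, v i ∈ Set.range pts} ⊆ W →
      sampWON N k ((N : ℝ≥0∞)⁻¹ • ∑ i ∈ t, Measure.dirac (pts i)) W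
        = ∏ j ∈ Finset.range k, (((t.card : ℝ≥0∞) - j) / N) := by
  intro k
  induction k with
  | zero =>
    intro t W hWm hWT
    rw [Finset.range_zero, Finset.prod_empty]
    exact Measure.dirac_apply_of_mem (hWT (fun i => i.elim0))
  | succ k ih =>
    intro t W hWm hWT
    have hunf : sampWON N (k+1) ((N : ℝ≥0∞)⁻¹ • ∑ i ∈ t, Measure.dirac (pts i))
        = ((N : ℝ≥0∞)⁻¹ • ∑ i ∈ t, Measure.dirac (pts i)).bind
          (fun p => (sampWON N k (((N : ℝ≥0∞)⁻¹ • ∑ i ∈ t, Measure.dirac (pts i))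
              - (N : ℝ≥0∞)⁻¹ • Measure.dirac p)).map
            (fun v => Fin.cons p v)) := rfl
    rw [hunf, bind_atoms, Measure.smul_apply, Measure.coe_finset_sum, Finset.sum_apply]
    have hterm : ∀ i ∈ t,
        (Measure.map (fun v : Fin k → P => (Fin.cons (pts i) v : Fin (k+1) → P))
          (sampWON N k (((N : ℝ≥0∞)⁻¹ • ∑ j ∈ t, Measure.dirac (pts j))
            - (N : ℝ≥0∞)⁻¹ • Measure.dirac (pts i)))) W
        = ∏ j ∈ Finset.range k, ((((t.card : ℕ) - 1 : ℕ) - (j : ℝ≥0∞)) / N) := by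
      intro i hi
      rw [sub_dirac_erase N n hN pts t i hi,
        Measure.map_apply (measurable_fin_cons (pts i)) hWm,
        ih (t.erase i) _ ((measurable_fin_cons (pts i)) hWm)
          (cons_preimage_subset pts k W hWT i),
        Finset.card_erase_of_mem hi]
    rw [Finset.sum_congr rfl hterm, Finset.sum_const, smul_eq_mul, nsmul_eq_mul]
    by_cases ht : t = ∅
    · subst ht
      simp only [Finset.card_empty, Nat.cast_zero, mul_zero, zero_mul]
      refine (Finset.prod_eq_zero (Finset.mem_range.mpr (Nat.succ_pos k)) ?_).symm
      simp
    · have hc : 1 ≤ t.card := Finset.card_pos.mpr (Finset.nonempty_of_ne_empty ht)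
      rw [Finset.prod_range_succ']
      have hfac : ∀ j ∈ Finset.range k,
          (((t.card : ℝ≥0∞)) - ((j + 1 : ℕ) : ℝ≥0∞)) / N
            = (((t.card - 1 : ℕ) : ℝ≥0∞) - (j : ℝ≥0∞)) / N := by
        intro j _
        congr 1
        rw [ENNReal.natCast_sub, Nat.cast_add, Nat.cast_one, tsub_add_eq_tsub_tsub,
          tsub_right_comm]
      rw [Finset.prod_congr rfl hfac]
      push_cast
      rw [tsub_zero, ENNReal.div_eq_inv_mul]
      ring

lemma one_sub_mul_le {a b : ℝ≥0∞} (ha : a ≤ 1) (hb : b ≤ 1) :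
    1 - a * b ≤ (1 - a) + (1 - b) := by
  rw [tsub_le_iff_right]
  have h1 : a ≤ (1 - b) + a * b := by
    calc a = a * ((1 - b) + b) := by rw [tsub_add_cancel_of_le hb, mul_one]
      _ = a * (1 - b) + a * b := by ring
      _ ≤ (1 - b) + a * b := add_le_add_left (mul_le_of_le_one_left zero_le ha) _
  calc (1:ℝ≥0∞) = (1 - a) + a := (tsub_add_cancel_of_le ha).symm
    _ ≤ (1 - a) + ((1 - b) + a * b) := add_le_add_right h1 _
    _ = (1 - a) + (1 - b) + a * b := by ring

lemma one_sub_prod_le_sum (s : Finset ℕ) (f : ℕ → ℝ≥0∞) (hf : ∀ j, f j ≤ 1) :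
    1 - ∏ j ∈ s, f j ≤ ∑ j ∈ s, (1 - f j) := by
  classical
  refine Finset.induction_on s ?_ ?_
  · simp
  · intro i s his ih
    rw [Finset.prod_insert his, Finset.sum_insert his]
    calc 1 - f i * ∏ j ∈ s, f j ≤ (1 - f i) + (1 - ∏ j ∈ s, f j) :=
        one_sub_mul_le (hf i) (Finset.prod_le_one (fun _ _ => zero_le) (fun j _ => hf j))
      _ ≤ (1 - f i) + ∑ j ∈ s, (1 - f j) := add_le_add_right ih _

/-- For `M = (1/N)·Σ_{i=1}^{Na} δ_{p_i}` with all atoms in `S` (so `⟨M,1_S⟩ = a = n/N`)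
and `k ≥ 1`, the difference between sampling with replacement and without replacement,
evaluated on `1_{S^k}`, equals `a^k (1 − ∏_{j=0}^{k−1}(1 − j/(Na)))`; it is nonnegative
and bounded above by `a^{k−1} k(k−1)/(2N)`. -/
theorem sampling_with_minus_without_replacement
    {P : Type*} [MeasurableSpace P] [MeasurableSingletonClass P]
    (N n k : ℕ) (hN : 1 ≤ N) (hn : 1 ≤ n) (hk : 1 ≤ k)
    (S : Set P) (pts : Fin n → P) (hpts : ∀ i, pts i ∈ S)
    (M : Measure P) (hM : M = (N : ℝ≥0∞)⁻¹ • ∑ i, Measure.dirac (pts i))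
    (a : ℝ≥0∞) (ha : a = (n : ℝ≥0∞) / N) :
    sampWON N k M {v : Fin k → P | ∀ i, v i ∈ S} ≤
        sampWR k M {v : Fin k → P | ∀ i, v i ∈ S} ∧
    sampWR k M {v : Fin k → P | ∀ i, v i ∈ S} =
        sampWON N k M {v : Fin k → P | ∀ i, v i ∈ S} +
          a ^ k * (1 - ∏ j ∈ Finset.range k, (1 - (j : ℝ≥0∞) / ((N : ℝ≥0∞) * a))) ∧
    sampWR k M {v : Fin k → P | ∀ i, v i ∈ S} -
        sampWON N k M {v : Fin k → P | ∀ i, v i ∈ S} ≤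
          a ^ (k - 1) * ((k : ℝ≥0∞) * ((k : ℝ≥0∞) - 1)) / (2 * N) := by
  have hN0 : (N : ℝ≥0∞) ≠ 0 := Nat.cast_ne_zero.mpr (by omega)
  have hNtop : (N : ℝ≥0∞) ≠ ⊤ := ENNReal.natCast_ne_top N
  have hn0 : (n : ℝ≥0∞) ≠ 0 := Nat.cast_ne_zero.mpr (by omega)
  have hntop : (n : ℝ≥0∞) ≠ ⊤ := ENNReal.natCast_ne_top n
  have hatop : a ≠ ⊤ := by rw [ha]; exact (ENNReal.div_lt_top hntop hN0).ne
  have hTS : {v : Fin k → P | ∀ i, v i ∈ Set.range pts} ⊆ {v : Fin k → P | ∀ i, v i ∈ S} := by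
    intro v hv i
    obtain ⟨j, hj⟩ := hv i
    rw [← hj]; exact hpts j
  have hTm := measurable_T pts k
  -- value of sampling with replacement
  have hWRT : sampWR k M {v : Fin k → P | ∀ i, v i ∈ Set.range pts} = ((n : ℝ≥0∞) / N) ^ k := by
    rw [hM]; exact sampWR_val N n pts k _ hTm (fun v hv => hv)
  have hWRU : sampWR k M Set.univ = ((n : ℝ≥0∞) / N) ^ k := by
    rw [hM]; exact sampWR_val N n pts k _ MeasurableSet.univ (Set.subset_univ _)
  have hWR : sampWR k M {v : Fin k → P | ∀ i, v i ∈ S} = a ^ k := by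
    rw [ha]
    exact le_antisymm (hWRU ▸ measure_mono (Set.subset_univ _)) (hWRT ▸ measure_mono hTS)
  -- value of sampling without replacement
  have hNn : N ≠ 0 := by omega
  have hcard : ((Finset.univ : Finset (Fin n)).card : ℝ≥0∞) = (n : ℝ≥0∞) := by
    simp
  have hWONT : sampWON N k M {v : Fin k → P | ∀ i, v i ∈ Set.range pts}
      = ∏ j ∈ Finset.range k, (((n : ℝ≥0∞) - j) / N) := by
    rw [hM]
    rw [sampWON_val N n hNn pts k Finset.univ _ hTm (fun v hv => hv), hcard]
  have hWONU : sampWON N k M Set.univ = ∏ j ∈ Finset.range k, (((n : ℝ≥0∞) - j) / N) := by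
    rw [hM]
    rw [sampWON_val N n hNn pts k Finset.univ _ MeasurableSet.univ (Set.subset_univ _), hcard]
  have hWON : sampWON N k M {v : Fin k → P | ∀ i, v i ∈ S}
      = ∏ j ∈ Finset.range k, (((n : ℝ≥0∞) - j) / N) :=
    le_antisymm (hWONU ▸ measure_mono (Set.subset_univ _)) (hWONT ▸ measure_mono hTS)
  -- arithmetic
  have hNa : (N : ℝ≥0∞) * a = (n : ℝ≥0∞) := by
    rw [ha]; exact ENNReal.mul_div_cancel hN0 hNtop
  have hfac : ∀ j : ℕ, ((n : ℝ≥0∞) - j) / N = a * (1 - (j : ℝ≥0∞) / n) := by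
    intro j
    have h1 : (1 : ℝ≥0∞) - (j : ℝ≥0∞) / n = ((n : ℝ≥0∞) - j) / n := by
      rw [ENNReal.sub_div (fun _ _ => hn0), ENNReal.div_self hn0 hntop]
    rw [h1]
    calc ((n : ℝ≥0∞) - j) / N = ((n : ℝ≥0∞) * (n : ℝ≥0∞)⁻¹) * (((n : ℝ≥0∞) - j) / N) := by
          rw [ENNReal.mul_inv_cancel hn0 hntop, one_mul]
      _ = a * (((n : ℝ≥0∞) - j) / n) := by
          rw [ha, div_eq_mul_inv, div_eq_mul_inv, div_eq_mul_inv]; ring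
  set Q : ℝ≥0∞ := ∏ j ∈ Finset.range k, (1 - (j : ℝ≥0∞) / n) with hQ
  have hprod : ∏ j ∈ Finset.range k, (((n : ℝ≥0∞) - j) / N) = a ^ k * Q := by
    rw [Finset.prod_congr rfl (fun j _ => hfac j), Finset.prod_mul_distrib,
      Finset.prod_const, Finset.card_range, hQ]
  have hQ1 : Q ≤ 1 :=
    Finset.prod_le_one (fun _ _ => zero_le) (fun j _ => tsub_le_self)
  have haktop : a ^ k ≠ ⊤ := ENNReal.pow_ne_top hatop
  have hgoalQ : ∏ j ∈ Finset.range k, (1 - (j : ℝ≥0∞) / ((N : ℝ≥0∞) * a)) = Q := by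
    rw [hNa]
  refine ⟨?_, ?_, ?_⟩
  · rw [hWR, hWON, hprod]
    calc a ^ k * Q ≤ a ^ k * 1 := mul_le_mul_right hQ1 _
      _ = a ^ k := mul_one _
  · rw [hWR, hWON, hprod, hgoalQ, ← mul_add, add_tsub_cancel_of_le hQ1, mul_one]
  · rw [hWR, hWON, hprod]
    have hsub : a ^ k - a ^ k * Q = a ^ k * (1 - Q) := by
      rw [ENNReal.mul_sub (fun _ _ => haktop), mul_one]
    rw [hsub]
    -- bound 1 - Q
    have hx : ∀ x : ℝ≥0∞, 1 - (1 - x) ≤ x := by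
      intro x
      rw [tsub_le_iff_right]
      exact le_tsub_add.trans_eq (add_comm _ _)
    have hQsum : 1 - Q ≤ ∑ j ∈ Finset.range k, (j : ℝ≥0∞) / n := by
      refine (one_sub_prod_le_sum _ _ (fun j => tsub_le_self)).trans ?_
      exact Finset.sum_le_sum fun j _ => hx _
    set G : ℕ := ∑ j ∈ Finset.range k, j with hG
    have hsumval : ∑ j ∈ Finset.range k, (j : ℝ≥0∞) / n = (G : ℝ≥0∞) / n := by
      rw [hG]
      push_cast
      rw [div_eq_mul_inv, Finset.sum_mul]
      exact Finset.sum_congr rfl fun j _ => (div_eq_mul_inv _ _)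
    have hGauss : (k : ℝ≥0∞) * ((k : ℝ≥0∞) - 1) = (G : ℝ≥0∞) * 2 := by
      have hnat : G * 2 = k * (k - 1) := Finset.sum_range_id_mul_two k
      have h2 : ((k : ℝ≥0∞) - 1) = ((k - 1 : ℕ) : ℝ≥0∞) := by
        rw [ENNReal.natCast_sub, Nat.cast_one]
      rw [h2, ← Nat.cast_mul, ← hnat]
      push_cast
      ring
    have hnn : (n : ℝ≥0∞) * (n : ℝ≥0∞)⁻¹ = 1 := ENNReal.mul_inv_cancel hn0 hntop
    have h22 : (2 : ℝ≥0∞) * (2 : ℝ≥0∞)⁻¹ = 1 :=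
      ENNReal.mul_inv_cancel (by norm_num) (by norm_num)
    have hfinal : a ^ k * ((G : ℝ≥0∞) / n)
        = a ^ (k - 1) * ((k : ℝ≥0∞) * ((k : ℝ≥0∞) - 1)) / (2 * N) := by
      have hpow : a ^ k = a ^ (k - 1) * a := by
        conv_lhs => rw [show k = (k - 1) + 1 from by omega]
        rw [pow_succ]
      rw [hpow, hGauss, mul_div_assoc, mul_assoc]
      congr 1
      have ha' : a = (n : ℝ≥0∞) * (N : ℝ≥0∞)⁻¹ := by rw [ha, div_eq_mul_inv]
      rw [ha', div_eq_mul_inv, div_eq_mul_inv,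
        ENNReal.mul_inv (Or.inl (by norm_num)) (Or.inl (by norm_num))]
      calc (n : ℝ≥0∞) * (N : ℝ≥0∞)⁻¹ * ((G : ℝ≥0∞) * (n : ℝ≥0∞)⁻¹)
          = (G : ℝ≥0∞) * (N : ℝ≥0∞)⁻¹ * ((n : ℝ≥0∞) * (n : ℝ≥0∞)⁻¹) := by ring
        _ = (G : ℝ≥0∞) * (N : ℝ≥0∞)⁻¹ := by rw [hnn, mul_one]
        _ = (G : ℝ≥0∞) * 2 * ((2 : ℝ≥0∞)⁻¹ * (N : ℝ≥0∞)⁻¹) := by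
            rw [show (G : ℝ≥0∞) * 2 * ((2 : ℝ≥0∞)⁻¹ * (N : ℝ≥0∞)⁻¹)
              = (G : ℝ≥0∞) * (N : ℝ≥0∞)⁻¹ * ((2 : ℝ≥0∞) * (2 : ℝ≥0∞)⁻¹) from by ring,
              h22, mul_one]
    calc a ^ k * (1 - Q) ≤ a ^ k * ((G : ℝ≥0∞) / n) :=
        mul_le_mul_right (hQsum.trans_eq hsumval) _
      _ = a ^ (k - 1) * ((k : ℝ≥0∞) * ((k : ℝ≥0∞) - 1)) / (2 * N) := hfinal
end

section
/- Lipschitz estimate combining reaction factor and sampling: let h : E × ℝ₊ → ℝ₊ be Lipschitz in its second argument with constant L uniform in the first, with S := ∫_E sup_{a≥0} h(ȳ,a) ϱ(dȳ) < ∞, and let Ψ : E × P → ℝ₊ be bounded by ‖Ψ‖_∞. Let ψ₁,…,ψ_k : E × P → [0,1]. Then for any finite nonnegative measures m', m'' on P with total masses at most m*, |∫_E ϱ(dȳ) [ h(ȳ,⟨m',Ψ(ȳ,·)⟩)∏_{i=1}^k ⟨m',ψ_i(ȳ,·)⟩ − h(ȳ,⟨m'',Ψ(ȳ,·)⟩)∏_{i=1}^k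 ⟨m'',ψ_i(ȳ,·)⟩ ]| ≤ [ L‖Ψ‖_∞ ϱ(E) (2m*) + S k ] (2m*)^{k−1} · sup_{‖ψ‖_∞≤1}|⟨m'−m'',ψ⟩|. -/
open MeasureTheory
open scoped ENNReal NNReal

lemma aux_prod_diff {ι : Type*} [DecidableEq ι] (M : ℝ) (a b : ι → ℝ) (s : Finset ι)
    (ha0 : ∀ i ∈ s, 0 ≤ a i) (haM : ∀ i ∈ s, a i ≤ M)
    (hb0 : ∀ i ∈ s, 0 ≤ b i) (hbM : ∀ i ∈ s, b i ≤ M) :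
    |∏ i ∈ s, a i - ∏ i ∈ s, b i| ≤ (∑ i ∈ s, |a i - b i|) * M ^ (s.card - 1) := by
  induction s using Finset.induction with
  | empty => simp
  | @insert j s hj ih =>
    have hM : 0 ≤ M := le_trans (ha0 j (Finset.mem_insert_self j s)) (haM j (Finset.mem_insert_self j s))
    have ha0' : ∀ i ∈ s, 0 ≤ a i := fun i hi => ha0 i (Finset.mem_insert_of_mem hi)
    have haM' : ∀ i ∈ s, a i ≤ M := fun i hi => haM i (Finset.mem_insert_of_mem hi)
    have hb0' : ∀ i ∈ s, 0 ≤ b i := fun i hi => hb0 i (Finset.mem_insert_of_mem hi)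
    have hbM' : ∀ i ∈ s, b i ≤ M := fun i hi => hbM i (Finset.mem_insert_of_mem hi)
    rcases s.eq_empty_or_nonempty with rfl | hs
    · simp
    have hcard : s.card - 1 + 1 = s.card := Nat.sub_add_cancel (Finset.card_pos.mpr hs)
    rw [Finset.prod_insert hj, Finset.prod_insert hj, Finset.sum_insert hj,
      Finset.card_insert_of_notMem hj, Nat.add_sub_cancel]
    have hA0 : 0 ≤ ∏ i ∈ s, a i := Finset.prod_nonneg ha0'
    have hAM : ∏ i ∈ s, a i ≤ M ^ s.card := by
      calc ∏ i ∈ s, a i ≤ ∏ _i ∈ s, M := Finset.prod_le_prod ha0' haM'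
        _ = M ^ s.card := Finset.prod_const M
    have key : a j * ∏ i ∈ s, a i - b j * ∏ i ∈ s, b i
        = (a j - b j) * ∏ i ∈ s, a i + b j * (∏ i ∈ s, a i - ∏ i ∈ s, b i) := by ring
    calc |a j * ∏ i ∈ s, a i - b j * ∏ i ∈ s, b i|
        ≤ |(a j - b j) * ∏ i ∈ s, a i| + |b j * (∏ i ∈ s, a i - ∏ i ∈ s, b i)| := by
          rw [key]; exact abs_add_le _ _
      _ = |a j - b j| * |∏ i ∈ s, a i| + |b j| * |∏ i ∈ s, a i - ∏ i ∈ s, b i| := by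
          rw [abs_mul, abs_mul]
      _ ≤ |a j - b j| * M ^ s.card +
            M * ((∑ i ∈ s, |a i - b i|) * M ^ (s.card - 1)) := by
          gcongr
          · rw [abs_of_nonneg hA0]; exact hAM
          · rw [abs_of_nonneg (hb0 j (Finset.mem_insert_self j s))]
            exact hbM j (Finset.mem_insert_self j s)
          · exact ih ha0' haM' hb0' hbM'
      _ = (|a j - b j| + ∑ i ∈ s, |a i - b i|) * M ^ s.card := by
          have hpow : M * M ^ (s.card - 1) = M ^ s.card := by
            rw [← pow_succ']; rw [Nat.sub_add_cancel (Finset.card_pos.mpr hs)]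
          rw [← hpow]; ring

/-- Key Lipschitz estimate combining reaction factor and sampling: if `h(ybar,·)` is
`L`-Lipschitz, `S = ∫_E sup_{a≥0} h(ybar,a) ϱ(dybar) < ∞`, `0 ≤ Ψ ≤ ‖Ψ‖_∞`,
`0 ≤ ψ_i ≤ 1`, and `m', m''` have total masses at most `m*`, then
`|∫ ϱ(dybar)[h(ybar,⟨m',Ψ⟩)∏⟨m',ψ_i⟩ − h(ybar,⟨m'',Ψ⟩)∏⟨m'',ψ_i⟩]|
 ≤ [L‖Ψ‖_∞ϱ(E)(2m*) + Sk](2m*)^{k−1} sup_{‖ψ‖_∞≤1}|⟨m'−m'',ψ⟩|`. -/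
theorem reaction_rate_lipschitz_estimate
    {E P : Type*} [MetricSpace E] [CompactSpace E] [MeasurableSpace E] [BorelSpace E]
    [MetricSpace P] [CompactSpace P] [MeasurableSpace P] [BorelSpace P]
    (ϱ : Measure E) [IsFiniteMeasure ϱ]
    (k : ℕ) (hk : 1 ≤ k)
    (h : E → ℝ → ℝ) (L S CΨ mstar : ℝ)
    (hh_nonneg : ∀ y a, 0 ≤ a → 0 ≤ h y a)
    (hh_lip : ∀ y : E, ∀ a b : ℝ, |h y a - h y b| ≤ L * |a - b|)
    (hbddabove : ∀ y : E, BddAbove (h y '' Set.Ici 0))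
    (hSint : Integrable (fun y : E => sSup (h y '' Set.Ici 0)) ϱ)
    (hS : S = ∫ y, sSup (h y '' Set.Ici 0) ∂ϱ)
    (Ψ : E → P → ℝ)
    (hΨ_meas : ∀ y, Measurable (Ψ y))
    (hΨ_nonneg : ∀ y p, 0 ≤ Ψ y p) (hΨ_bdd : ∀ y p, Ψ y p ≤ CΨ)
    (ψ : Fin k → E → P → ℝ)
    (hψ_meas : ∀ i y, Measurable (ψ i y))
    (hψ_nonneg : ∀ i y p, 0 ≤ ψ i y p) (hψ_bdd : ∀ i y p, ψ i y p ≤ 1)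
    (m' m'' : Measure P) [IsFiniteMeasure m'] [IsFiniteMeasure m'']
    (hm' : (m' Set.univ).toReal ≤ mstar) (hm'' : (m'' Set.univ).toReal ≤ mstar) :
    |∫ y, (h y (∫ p, Ψ y p ∂m') * ∏ i, ∫ p, ψ i y p ∂m' -
          h y (∫ p, Ψ y p ∂m'') * ∏ i, ∫ p, ψ i y p ∂m'') ∂ϱ| ≤
      (L * CΨ * (ϱ Set.univ).toReal * (2 * mstar) + S * k) * (2 * mstar) ^ (k - 1) *
        ⨆ g : {g : P → ℝ // Measurable g ∧ ∀ p, |g p| ≤ 1},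
          |(∫ p, (g : P → ℝ) p ∂m') - ∫ p, (g : P → ℝ) p ∂m''| := by
  have hmstar : 0 ≤ mstar := le_trans ENNReal.toReal_nonneg hm'
  haveI hne : Nonempty {g : P → ℝ // Measurable g ∧ ∀ p, |g p| ≤ 1} :=
    ⟨⟨fun _ => 0, measurable_const, fun p => by simp⟩⟩
  set D := ⨆ g : {g : P → ℝ // Measurable g ∧ ∀ p, |g p| ≤ 1},
      |(∫ p, (g : P → ℝ) p ∂m') - ∫ p, (g : P → ℝ) p ∂m''| with hDdef
  -- integrability of bounded measurable functions
  have hintb : ∀ (μ : Measure P) [IsFiniteMeasure μ] (f : P → ℝ) (c : ℝ),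
      Measurable f → (∀ p, |f p| ≤ c) → Integrable f μ := by
    intro μ _ f c hf hb
    exact (integrable_const c).mono' hf.aestronglyMeasurable
      (Filter.Eventually.of_forall (fun p => by simpa [Real.norm_eq_abs] using hb p))
  have hbddD : BddAbove (Set.range fun g : {g : P → ℝ // Measurable g ∧ ∀ p, |g p| ≤ 1} =>
      |(∫ p, (g : P → ℝ) p ∂m') - ∫ p, (g : P → ℝ) p ∂m''|) := by
    refine ⟨mstar + mstar, ?_⟩
    rintro x ⟨g, rfl⟩
    have habs : ∀ (μ : Measure P) [IsFiniteMeasure μ], (μ Set.univ).toReal ≤ mstar →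
        |∫ p, (g : P → ℝ) p ∂μ| ≤ mstar := by
      intro μ _ hμ
      calc |∫ p, (g : P → ℝ) p ∂μ| ≤ ∫ _p, (1 : ℝ) ∂μ := by
            simpa [Real.norm_eq_abs] using
              norm_integral_le_of_norm_le (μ := μ) (f := fun p => (g : P → ℝ) p)
                (integrable_const 1)
                (Filter.Eventually.of_forall fun p => by
                  simpa [Real.norm_eq_abs] using g.2.2 p)
        _ = (μ Set.univ).toReal := by simp; rfl
        _ ≤ mstar := hμ
    calc |(∫ p, (g : P → ℝ) p ∂m') - ∫ p, (g : P → ℝ) p ∂m''|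
        ≤ |∫ p, (g : P → ℝ) p ∂m'| + |∫ p, (g : P → ℝ) p ∂m''| := abs_sub _ _
      _ ≤ mstar + mstar := add_le_add (habs m' hm') (habs m'' hm'')
  have hDge : ∀ f : P → ℝ, Measurable f → (∀ p, |f p| ≤ 1) →
      |(∫ p, f p ∂m') - ∫ p, f p ∂m''| ≤ D :=
    fun f hf hb => le_ciSup hbddD ⟨f, hf, hb⟩
  have hD0 : 0 ≤ D := by
    have := hDge (fun _ => 0) measurable_const (fun p => by simp)
    simpa using this
  -- degenerate case : E empty
  rcases isEmpty_or_nonempty E with hE | hE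
  · have hϱ : ϱ = 0 := ϱ.eq_zero_of_isEmpty
    simp only [hϱ, integral_zero_measure, abs_zero, hS] at *
    simp
  -- degenerate case : P empty
  rcases isEmpty_or_nonempty P with hP | hP
  · have hm'0 : m' = 0 := m'.eq_zero_of_isEmpty
    have hm''0 : m'' = 0 := m''.eq_zero_of_isEmpty
    have hDz : D = 0 := by
      rw [hDdef]
      simp [hm'0, hm''0]
    rw [hDz, mul_zero]
    have hkne : k ≠ 0 := Nat.one_le_iff_ne_zero.mp hk
    simp [hm'0, hm''0, Finset.prod_const, zero_pow hkne]
  -- main case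
  have hL0 : 0 ≤ L := by
    have h1 := hh_lip (Classical.arbitrary E) 0 1
    have h2 : (0 : ℝ) ≤ |h (Classical.arbitrary E) 0 - h (Classical.arbitrary E) 1| :=
      abs_nonneg _
    have : |(0 : ℝ) - 1| = 1 := by norm_num
    rw [this, mul_one] at h1
    linarith
  have hC0 : 0 ≤ CΨ :=
    le_trans (hΨ_nonneg (Classical.arbitrary E) (Classical.arbitrary P))
      (hΨ_bdd (Classical.arbitrary E) (Classical.arbitrary P))
  have hHy : ∀ y, ∀ a : ℝ, 0 ≤ a → h y a ≤ sSup (h y '' Set.Ici 0) :=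
    fun y a ha => le_csSup (hbddabove y) ⟨a, ha, rfl⟩
  have hH0 : ∀ y, 0 ≤ sSup (h y '' Set.Ici 0) :=
    fun y => le_trans (hh_nonneg y 0 le_rfl) (hHy y 0 le_rfl)
  have hS0 : 0 ≤ S := hS ▸ integral_nonneg (fun y => hH0 y)
  have hϱ0 : 0 ≤ (ϱ Set.univ).toReal := ENNReal.toReal_nonneg
  -- Ψ estimate
  have hΨD : ∀ y, |(∫ p, Ψ y p ∂m') - ∫ p, Ψ y p ∂m''| ≤ CΨ * D := by
    intro y
    rcases eq_or_lt_of_le hC0 with hC | hC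
    · have hz : ∀ p, Ψ y p = 0 := fun p => le_antisymm (hC ▸ hΨ_bdd y p) (hΨ_nonneg y p)
      simp [hz]
      positivity
    · have hg := hDge (fun p => Ψ y p / CΨ) ((hΨ_meas y).div_const CΨ)
        (fun p => by
          rw [abs_of_nonneg (div_nonneg (hΨ_nonneg y p) hC0)]
          exact (div_le_one hC).mpr (hΨ_bdd y p))
      rw [integral_div, integral_div, div_sub_div_same, abs_div, abs_of_pos hC,
        div_le_iff₀ hC] at hg
      have : D * CΨ = CΨ * D := mul_comm _ _
      linarith [hg]
  -- ψ integral bounds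
  have hψbd : ∀ (μ : Measure P), ∀ (_ : IsFiniteMeasure μ), (μ Set.univ).toReal ≤ mstar →
      ∀ i y, 0 ≤ ∫ p, ψ i y p ∂μ ∧ ∫ p, ψ i y p ∂μ ≤ mstar := by
    intro μ hfin hμ i y
    refine ⟨integral_nonneg (fun p => hψ_nonneg i y p), ?_⟩
    calc ∫ p, ψ i y p ∂μ ≤ ∫ _p, (1 : ℝ) ∂μ :=
          integral_mono
            (hintb μ (ψ i y) 1 (hψ_meas i y)
              (fun p => abs_le.mpr ⟨by linarith [hψ_nonneg i y p], hψ_bdd i y p⟩))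
            (integrable_const 1) (fun p => hψ_bdd i y p)
      _ = (μ Set.univ).toReal := by simp; rfl
      _ ≤ mstar := hμ
  have hb' := hψbd m' inferInstance hm'
  have hb'' := hψbd m'' inferInstance hm''
  -- pointwise bound
  have hpt : ∀ y, |h y (∫ p, Ψ y p ∂m') * ∏ i, ∫ p, ψ i y p ∂m' -
      h y (∫ p, Ψ y p ∂m'') * ∏ i, ∫ p, ψ i y p ∂m''|
      ≤ L * CΨ * D * mstar ^ k +
        sSup (h y '' Set.Ici 0) * ((k : ℝ) * mstar ^ (k - 1) * D) := by
    intro y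
    set a' := ∫ p, Ψ y p ∂m' with ha'def
    set a'' := ∫ p, Ψ y p ∂m'' with ha''def
    have ha'0 : 0 ≤ a' := integral_nonneg fun p => hΨ_nonneg y p
    have ha''0 : 0 ≤ a'' := integral_nonneg fun p => hΨ_nonneg y p
    set A' := ∏ i, ∫ p, ψ i y p ∂m' with hA'def
    set A'' := ∏ i, ∫ p, ψ i y p ∂m'' with hA''def
    have hA'0 : 0 ≤ A' := Finset.prod_nonneg fun i _ => (hb' i y).1
    have hA'le : A' ≤ mstar ^ k := by
      calc A' ≤ ∏ _i : Fin k, mstar :=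
            Finset.prod_le_prod (fun i _ => (hb' i y).1) (fun i _ => (hb' i y).2)
        _ = mstar ^ k := by simp
    have hAA : |A' - A''| ≤ (k : ℝ) * mstar ^ (k - 1) * D := by
      have haux := aux_prod_diff mstar (fun i => ∫ p, ψ i y p ∂m')
        (fun i => ∫ p, ψ i y p ∂m'') Finset.univ
        (fun i _ => (hb' i y).1) (fun i _ => (hb' i y).2)
        (fun i _ => (hb'' i y).1) (fun i _ => (hb'' i y).2)
      rw [Finset.card_univ, Fintype.card_fin] at haux
      have hsum : ∑ i : Fin k, |(∫ p, ψ i y p ∂m') - ∫ p, ψ i y p ∂m''| ≤ (k : ℝ) * D := by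
        calc ∑ i : Fin k, |(∫ p, ψ i y p ∂m') - ∫ p, ψ i y p ∂m''|
            ≤ ∑ _i : Fin k, D :=
              Finset.sum_le_sum fun i _ => hDge (ψ i y) (hψ_meas i y)
                (fun p => abs_le.mpr ⟨by linarith [hψ_nonneg i y p], hψ_bdd i y p⟩)
          _ = (k : ℝ) * D := by simp [mul_comm]
      calc |A' - A''| ≤ (∑ i : Fin k, |(∫ p, ψ i y p ∂m') - ∫ p, ψ i y p ∂m''|) *
            mstar ^ (k - 1) := haux
        _ ≤ ((k : ℝ) * D) * mstar ^ (k - 1) :=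
            mul_le_mul_of_nonneg_right hsum (pow_nonneg hmstar _)
        _ = (k : ℝ) * mstar ^ (k - 1) * D := by ring
    have hhd : |h y a' - h y a''| ≤ L * (CΨ * D) := by
      calc |h y a' - h y a''| ≤ L * |a' - a''| := hh_lip y a' a''
        _ ≤ L * (CΨ * D) := mul_le_mul_of_nonneg_left (hΨD y) hL0
    have hh''le : h y a'' ≤ sSup (h y '' Set.Ici 0) := hHy y a'' ha''0
    have hh''0 : 0 ≤ h y a'' := hh_nonneg y a'' ha''0
    have hdecomp : h y a' * A' - h y a'' * A''
        = (h y a' - h y a'') * A' + h y a'' * (A' - A'') := by ring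
    calc |h y a' * A' - h y a'' * A''|
        ≤ |(h y a' - h y a'') * A'| + |h y a'' * (A' - A'')| := by
          rw [hdecomp]; exact abs_add_le _ _
      _ = |h y a' - h y a''| * |A'| + |h y a''| * |A' - A''| := by
          rw [abs_mul, abs_mul]
      _ ≤ (L * (CΨ * D)) * mstar ^ k +
            sSup (h y '' Set.Ici 0) * ((k : ℝ) * mstar ^ (k - 1) * D) := by
          refine add_le_add (mul_le_mul hhd ?_ (abs_nonneg _) ?_)
            (mul_le_mul ?_ hAA (abs_nonneg _) (hH0 y))
          · rw [abs_of_nonneg hA'0]; exact hA'le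
          · exact mul_nonneg hL0 (mul_nonneg hC0 hD0)
          · rw [abs_of_nonneg hh''0]; exact hh''le
      _ = L * CΨ * D * mstar ^ k +
            sSup (h y '' Set.Ici 0) * ((k : ℝ) * mstar ^ (k - 1) * D) := by ring
  -- integrate the pointwise bound
  have hGint : Integrable (fun y : E => L * CΨ * D * mstar ^ k +
      sSup (h y '' Set.Ici 0) * ((k : ℝ) * mstar ^ (k - 1) * D)) ϱ :=
    (integrable_const _).add (hSint.mul_const _)
  have hbound : |∫ y, (h y (∫ p, Ψ y p ∂m') * ∏ i, ∫ p, ψ i y p ∂m' -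
        h y (∫ p, Ψ y p ∂m'') * ∏ i, ∫ p, ψ i y p ∂m'') ∂ϱ|
      ≤ ∫ y, (L * CΨ * D * mstar ^ k +
          sSup (h y '' Set.Ici 0) * ((k : ℝ) * mstar ^ (k - 1) * D)) ∂ϱ := by
    have := norm_integral_le_of_norm_le (μ := ϱ)
      (f := fun y => h y (∫ p, Ψ y p ∂m') * ∏ i, ∫ p, ψ i y p ∂m' -
        h y (∫ p, Ψ y p ∂m'') * ∏ i, ∫ p, ψ i y p ∂m'') hGint
      (Filter.Eventually.of_forall fun y => by
        simpa [Real.norm_eq_abs] using hpt y)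
    simpa [Real.norm_eq_abs] using this
  have hIB : ∫ y, (L * CΨ * D * mstar ^ k +
        sSup (h y '' Set.Ici 0) * ((k : ℝ) * mstar ^ (k - 1) * D)) ∂ϱ
      = (ϱ Set.univ).toReal * (L * CΨ * D * mstar ^ k) +
        S * ((k : ℝ) * mstar ^ (k - 1) * D) := by
    rw [integral_add (integrable_const _) (hSint.mul_const _), integral_const,
      integral_mul_const, smul_eq_mul, hS]
    rfl
  -- final comparison
  have hpow1 : mstar ^ k ≤ (2 * mstar) ^ k :=
    pow_le_pow_left₀ hmstar (by linarith) k
  have hpow2 : mstar ^ (k - 1) ≤ (2 * mstar) ^ (k - 1) :=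
    pow_le_pow_left₀ hmstar (by linarith) _
  have hpowk : (2 * mstar) ^ k = (2 * mstar) ^ (k - 1) * (2 * mstar) := by
    rw [← pow_succ, Nat.sub_add_cancel hk]
  have t1 : (L * CΨ * (ϱ Set.univ).toReal * D) * mstar ^ k
      ≤ (L * CΨ * (ϱ Set.univ).toReal * D) * (2 * mstar) ^ k :=
    mul_le_mul_of_nonneg_left hpow1
      (mul_nonneg (mul_nonneg (mul_nonneg hL0 hC0) hϱ0) hD0)
  have t2 : (S * (k : ℝ) * D) * mstar ^ (k - 1)
      ≤ (S * (k : ℝ) * D) * (2 * mstar) ^ (k - 1) :=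
    mul_le_mul_of_nonneg_left hpow2
      (mul_nonneg (mul_nonneg hS0 (Nat.cast_nonneg k)) hD0)
  calc |∫ y, (h y (∫ p, Ψ y p ∂m') * ∏ i, ∫ p, ψ i y p ∂m' -
        h y (∫ p, Ψ y p ∂m'') * ∏ i, ∫ p, ψ i y p ∂m'') ∂ϱ|
      ≤ (ϱ Set.univ).toReal * (L * CΨ * D * mstar ^ k) +
        S * ((k : ℝ) * mstar ^ (k - 1) * D) := hIB ▸ hbound
    _ = (L * CΨ * (ϱ Set.univ).toReal * D) * mstar ^ k +
        (S * (k : ℝ) * D) * mstar ^ (k - 1) := by ring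
    _ ≤ (L * CΨ * (ϱ Set.univ).toReal * D) * (2 * mstar) ^ k +
        (S * (k : ℝ) * D) * (2 * mstar) ^ (k - 1) := add_le_add t1 t2
    _ = (L * CΨ * (ϱ Set.univ).toReal * (2 * mstar) + S * k) * (2 * mstar) ^ (k - 1) * D := by
        rw [hpowk]; ring
end
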